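/- arXiv:2204.08395 — 4 statements merged into one kernel-verified Lean document; each statement's English description precedes it below -/
import Mathlib

section
/- Let μ = α·m + βπ·δ₀ on ℝ with α > 0, β ≥ 0, where m is Lebesgue measure. For each t > 0, the function ψ_t = c(t)·1_{(−t,t)} with c(t) = √(2π)/(2π(α + tβ)) satisfies the convolution equation α√(2π) ψ_t(x) + (βπ/√(2π)) ∫_{−t}^{t} ψ_t = 1 for all x ∈ (−t,t), and consequently h(t) := π (d/dt)[(1/√(2π))∫ ψ_t] = α/(α + tβ)². -/
open Real Set

noncomputable section

/-- for `μ = α·m + βπ·δ₀`, the function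
`ψ_t = c(t)·1_{(−t,t)}` with `c(t) = √(2π)/(2π(α+tβ))` solves the convolution
equation `α√(2π) ψ_t(x) + (βπ/√(2π)) ∫ ψ_t = 1` on `(−t,t)`, and hence
`h(t) = π (d/dt)[(1/√(2π)) ∫ ψ_t] = α/(α+tβ)²`. -/
theorem stmt16 (α β : ℝ) (hα : 0 < α) (hβ : 0 ≤ β)
    (c : ℝ → ℝ) (hc : ∀ t, c t = Real.sqrt (2 * Real.pi) / (2 * Real.pi * (α + t * β)))
    (ψ : ℝ → ℝ → ℝ)
    (hψ : ∀ t x, ψ t x = if x ∈ Ioo (-t) t then c t else 0) :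
    (∀ t > (0 : ℝ), ∀ x ∈ Ioo (-t) t,
      α * Real.sqrt (2 * Real.pi) * ψ t x +
        (β * Real.pi / Real.sqrt (2 * Real.pi)) * (∫ y in (-t)..t, ψ t y) = 1) ∧
    (∀ t > (0 : ℝ), HasDerivAt
      (fun s : ℝ => (1 / Real.sqrt (2 * Real.pi)) * ∫ y in (-s)..s, ψ s y)
      (α / (Real.pi * (α + t * β) ^ 2)) t) := by
  have h2π : (0:ℝ) < 2 * Real.pi := by positivity
  have hS : (0:ℝ) < Real.sqrt (2 * Real.pi) := Real.sqrt_pos.mpr h2π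
  have hS2 : Real.sqrt (2 * Real.pi) * Real.sqrt (2 * Real.pi) = 2 * Real.pi :=
    Real.mul_self_sqrt h2π.le
  have hint : ∀ s > (0:ℝ), (∫ y in (-s)..s, ψ s y) = 2 * s * c s := by
    intro s hs
    have hfun : (fun y => ψ s y) = Set.indicator (Ioo (-s) s) (fun _ => c s) := by
      funext y
      rw [hψ]
      simp [Set.indicator_apply]
    rw [hfun, intervalIntegral.integral_of_le (by linarith),
      MeasureTheory.setIntegral_indicator measurableSet_Ioo,
      Set.inter_eq_right.mpr Set.Ioo_subset_Ioc_self,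
      MeasureTheory.setIntegral_const,
      Real.volume_real_Ioo_of_le (by linarith), smul_eq_mul]
    ring
  constructor
  · intro t ht x hx
    have hD : 0 < α + t * β := by
      have := mul_nonneg ht.le hβ
      linarith
    rw [hψ, if_pos hx, hint t ht, hc]
    generalize hSv : Real.sqrt (2 * Real.pi) = S at hS hS2 ⊢
    have hπ := Real.pi_pos
    field_simp
    linear_combination α * hS2
  · intro t ht
    have hD : 0 < α + t * β := by
      have := mul_nonneg ht.le hβ
      linarith
    have hg : HasDerivAt (fun s : ℝ => s / (Real.pi * (α + s * β)))
        (α / (Real.pi * (α + t * β) ^ 2)) t := by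
      have h1 : HasDerivAt (fun s : ℝ => s) 1 t := hasDerivAt_id t
      have h2 : HasDerivAt (fun s : ℝ => Real.pi * (α + s * β)) (Real.pi * β) t := by
        simpa using (((hasDerivAt_id t).mul_const β).const_add α).const_mul Real.pi
      have h3 : HasDerivAt (fun s : ℝ => s / (Real.pi * (α + s * β))) _ t :=
        h1.div h2 (by positivity)
      convert h3 using 1
      field_simp
      ring
    have hev : (fun s : ℝ => s / (Real.pi * (α + s * β))) =ᶠ[nhds t]
        (fun s : ℝ => (1 / Real.sqrt (2 * Real.pi)) * ∫ y in (-s)..s, ψ s y) := by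
      filter_upwards [eventually_gt_nhds ht] with s hs
      rw [hint s hs, hc]
      have hDs : 0 < α + s * β := by
        have := mul_nonneg hs.le hβ
        linarith
      rw [eq_comm]
      generalize hSv : Real.sqrt (2 * Real.pi) = S at hS hS2 ⊢
      have hπ := Real.pi_pos
      field_simp
    exact hg.congr_of_eventuallyEq hev.symm

end
end

section
/- Let μ be a PW-sampling measure with associated function h(t) = √(π/2) (d/dt) ∫ ψ_t, where ψ_t solves ψ_t ∗ μ̂ = 1 on (−t,t) with support in [−t,t]. For r ≥ 0 let μ_r = μ + rπδ₀. Then the solution f_t of f_t ∗ μ̂_r = 1 on (−t,t) (supported in [−t,t]) is f_t = (1 − c(t)) ψ_t, where c(t) = a(t)/(1+a(t)) and a(t) = r√(π/2) ∫ ψ_t; consequently h_{μ_r}(t) = h(t)/(1 + r ∫₀ᵗ h)². -/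
open Real Set MeasureTheory

noncomputable section

/-- adding an eigenvalue at the origin: let `μ` be PW-sampling
with `ψ_t ∗ μ̂ = 1` on `(−t,t)` (encoded through the convolution operator `T`,
convolution with `μ̂`) and `h(t) = √(π/2) (d/dt) ∫ ψ_t`.  For `μ_r = μ + rπδ₀`,
the solution of `f_t ∗ μ̂_r = 1` on `(−t,t)` is `f_t = (1 − c(t)) ψ_t` with
`c = a/(1+a)`, `a(t) = r√(π/2)∫ψ_t`; consequently
`h_{μ_r}(t) = h(t)/(1 + r∫₀ᵗ h)²`. -/
theorem stmt17 (r : ℝ) (hr : 0 ≤ r)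
    (ψ : ℝ → ℝ → ℝ) (h : ℝ → ℝ)
    (T : (ℝ → ℝ) → (ℝ → ℝ))
    -- `T` (convolution with `μ̂`) commutes with scalar multiplication:
    (hTsmul : ∀ (k : ℝ) (g : ℝ → ℝ), T (fun x => k * g x) = fun x => k * T g x)
    -- `ψ_t ∗ μ̂ = 1` on `(−t,t)`:
    (hψeq : ∀ t > (0 : ℝ), ∀ x ∈ Ioo (-t) t, T (ψ t) x = 1)
    (hψint : ∀ t : ℝ, Integrable (ψ t))
    -- `√(π/2) ∫ ψ_t = ∫₀ᵗ h`, i.e. `h = √(π/2) (d/dt)∫ψ_t` with `∫ψ_0 = 0`: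
    (hint : ∀ t : ℝ, Real.sqrt (Real.pi / 2) * (∫ y, ψ t y) = ∫ s in (0 : ℝ)..t, h s)
    (hh : ∀ t > (0 : ℝ), HasDerivAt (fun u : ℝ => ∫ s in (0 : ℝ)..u, h s) (h t) t)
    (a c : ℝ → ℝ)
    (ha : ∀ t, a t = r * (Real.sqrt (Real.pi / 2) * ∫ y, ψ t y))
    (hapos : ∀ t, 0 ≤ a t)
    (hcdef : ∀ t, c t = a t / (1 + a t))
    (f : ℝ → ℝ → ℝ) (hf : ∀ t x, f t x = (1 - c t) * ψ t x) :
    -- `f_t ∗ μ̂_r = 1` on `(−t,t)`: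
    (∀ t > (0 : ℝ), ∀ x ∈ Ioo (-t) t,
      T (f t) x + r * Real.sqrt (Real.pi / 2) * (∫ y, f t y) = 1) ∧
    -- `h_{μ_r}(t) = h(t)/(1 + r ∫₀ᵗ h)²`:
    (∀ t > (0 : ℝ), HasDerivAt
      (fun u : ℝ => Real.sqrt (Real.pi / 2) * ∫ y, f u y)
      (h t / (1 + r * ∫ s in (0 : ℝ)..t, h s) ^ 2) t) := by
  have hA : ∀ t, a t = r * ∫ s in (0 : ℝ)..t, h s := fun t => by
    rw [ha, hint]
  have hpos : ∀ t, (0 : ℝ) < 1 + a t := fun t => by linarith [hapos t]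
  have hcne : ∀ t, 1 - c t = 1 / (1 + a t) := fun t => by
    rw [hcdef, eq_div_iff (hpos t).ne', sub_mul, div_mul_cancel₀ _ (hpos t).ne']
    ring
  have hfint : ∀ t, (∫ y, f t y) = (1 - c t) * ∫ y, ψ t y := fun t => by
    simp only [hf]; rw [MeasureTheory.integral_const_mul]
  constructor
  · intro t ht x hx
    have hft : f t = fun x => (1 - c t) * ψ t x := funext fun x => hf t x
    rw [hft, hTsmul]
    simp only [hψeq t ht x hx, MeasureTheory.integral_const_mul]
    have e : r * Real.sqrt (Real.pi / 2) * ((1 - c t) * ∫ y, ψ t y)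
        = (1 - c t) * a t := by rw [ha]; ring
    rw [e, hcne t]
    field_simp [(hpos t).ne']
  · intro t ht
    have key : (fun u : ℝ => Real.sqrt (Real.pi / 2) * ∫ y, f u y)
        = fun u => (∫ s in (0 : ℝ)..u, h s) / (1 + r * ∫ s in (0 : ℝ)..u, h s) := by
      funext u
      rw [hfint u]
      calc Real.sqrt (Real.pi / 2) * ((1 - c u) * ∫ y, ψ u y)
          = (1 - c u) * (Real.sqrt (Real.pi / 2) * ∫ y, ψ u y) := by ring
        _ = (1 / (1 + a u)) * (∫ s in (0 : ℝ)..u, h s) := by rw [hcne, hint]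
        _ = (∫ s in (0 : ℝ)..u, h s) / (1 + r * ∫ s in (0 : ℝ)..u, h s) := by
            rw [← hA u, one_div_mul_eq_div]
    rw [key]
    have hne : (1 + r * ∫ s in (0 : ℝ)..t, h s) ≠ 0 := by
      rw [← hA t]; exact (hpos t).ne'
    have hden : HasDerivAt (fun u : ℝ => 1 + r * ∫ s in (0 : ℝ)..u, h s) (r * h t) t := by
      exact ((hh t ht).const_mul r).const_add 1
    have hd := (hh t ht).div hden hne
    refine hd.congr_deriv ?_
    rw [div_left_inj' (pow_ne_zero 2 hne)]
    ring
end
end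

section
/- Let μ(x) dx = (1 − 1/(1+x²)) dx on ℝ. For each t > 0, the function ψ_t(x) = (1/(2√(2π)))·((2t + t²) + 2 − x²) on (−t,t), extended by zero, satisfies the equation ψ(x) − (1/2)(e^{−x} F(x) + e^{x} G(x)) = 1/√(2π) for x ∈ (−t,t), where F(x) = ∫_{−t}^{x} ψ(y) e^{y} dy and G(x) = ∫_{x}^{t} ψ(y) e^{−y} dy; consequently ∫_{−t}^{t} ψ_t = (1/(2√(2π)))((4/3)t³ + 4t² + 4t) and (d/dt)∫_{−t}^{t} ψ_t = √(2/π)(t+1)². -/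
open Real Set

noncomputable section

lemma keyP (A a b : ℝ) : ∫ y in a..b, (A - y^2) * Real.exp y =
    Real.exp b * (A - b^2 + 2*b - 2) - Real.exp a * (A - a^2 + 2*a - 2) := by
  apply intervalIntegral.integral_eq_sub_of_hasDerivAt
  · intro y _
    have hp : HasDerivAt (fun y : ℝ => A - y^2 + 2*y - 2) (0 - (2:ℕ)*y^1 + 2*1 - 0) y :=
      (((hasDerivAt_const y A).sub (hasDerivAt_pow 2 y)).add
        ((hasDerivAt_id y).const_mul 2)).sub (hasDerivAt_const y 2)
    have h := (Real.hasDerivAt_exp y).mul hp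
    refine h.congr_deriv ?_
    push_cast
    ring
  · apply Continuous.intervalIntegrable; continuity

lemma keyM (A a b : ℝ) : ∫ y in a..b, (A - y^2) * Real.exp (-y) =
    (-Real.exp (-b)) * (A - b^2 - 2*b - 2) - (-Real.exp (-a)) * (A - a^2 - 2*a - 2) := by
  apply intervalIntegral.integral_eq_sub_of_hasDerivAt
  · intro y _
    have he : HasDerivAt (fun y : ℝ => -Real.exp (-y)) (Real.exp (-y)) y := by
      have := ((hasDerivAt_neg y).exp).neg
      simp only [mul_neg, mul_one, neg_neg] at this; exact this
    have hp : HasDerivAt (fun y : ℝ => A - y^2 - 2*y - 2) (0 - (2:ℕ)*y^1 - 2*1 - 0) y :=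
      (((hasDerivAt_const y A).sub (hasDerivAt_pow 2 y)).sub
        ((hasDerivAt_id y).const_mul 2)).sub (hasDerivAt_const y 2)
    have h := he.mul hp
    refine h.congr_deriv ?_
    push_cast
    ring
  · apply Continuous.intervalIntegrable; continuity

lemma ae_ne' (t : ℝ) : ∀ᵐ y : ℝ, y ≠ t := by
  rw [MeasureTheory.ae_iff]
  simpa using Real.volume_singleton (a := t)

/-- for `μ = (1 − 1/(1+x²)) dx`, the function
`ψ_t(x) = (1/(2√(2π)))((2t+t²)+2−x²)` on `(−t,t)` (zero outside) solves
`ψ − (1/2)(e^{−x}F + e^{x}G) = 1/√(2π)` on `(−t,t)`, where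
`F(x) = ∫_{−t}^x ψ e^y dy`, `G(x) = ∫_x^t ψ e^{−y} dy`; consequently
`∫_{−t}^t ψ_t = (1/(2√(2π)))((4/3)t³+4t²+4t)` and
`(d/dt)∫_{−t}^t ψ_t = √(2/π)(t+1)²`. -/
theorem stmt18 (ψ : ℝ → ℝ → ℝ)
    (hψ : ∀ t x, ψ t x = if x ∈ Ioo (-t) t then
        (1 / (2 * Real.sqrt (2 * Real.pi))) * ((2 * t + t ^ 2) + 2 - x ^ 2) else 0) :
    (∀ t > (0 : ℝ), ∀ x ∈ Ioo (-t) t,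
      ψ t x - (1 / 2) *
          (Real.exp (-x) * (∫ y in (-t)..x, ψ t y * Real.exp y) +
            Real.exp x * (∫ y in x..t, ψ t y * Real.exp (-y))) =
        1 / Real.sqrt (2 * Real.pi)) ∧
    (∀ t > (0 : ℝ), (∫ y in (-t)..t, ψ t y) =
      (1 / (2 * Real.sqrt (2 * Real.pi))) * ((4 / 3) * t ^ 3 + 4 * t ^ 2 + 4 * t)) ∧
    (∀ t > (0 : ℝ), HasDerivAt (fun s : ℝ => ∫ y in (-s)..s, ψ s y)
      (Real.sqrt (2 / Real.pi) * (t + 1) ^ 2) t) := by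
  have hπ : (0:ℝ) < Real.pi := Real.pi_pos
  have hs0 : Real.sqrt (2 * Real.pi) ≠ 0 := by positivity
  -- congruence lemma
  have hcg : ∀ (t a b : ℝ) (f : ℝ → ℝ), -t ≤ a → b ≤ t → a ≤ b →
      (∫ y in a..b, ψ t y * f y) =
        ∫ y in a..b, ((1 / (2 * Real.sqrt (2 * Real.pi))) *
          ((2 * t + t ^ 2) + 2 - y ^ 2)) * f y := by
    intro t a b f ha hb hab
    apply intervalIntegral.integral_congr_ae
    filter_upwards [ae_ne' t] with y hy hmem
    rw [Set.uIoc_of_le hab] at hmem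
    rw [hψ, if_pos]
    exact ⟨lt_of_le_of_lt ha hmem.1, lt_of_le_of_ne (hmem.2.trans hb) hy⟩
  have part2 : ∀ t > (0 : ℝ), (∫ y in (-t)..t, ψ t y) =
      (1 / (2 * Real.sqrt (2 * Real.pi))) * ((4 / 3) * t ^ 3 + 4 * t ^ 2 + 4 * t) := by
    intro t ht
    have h := hcg t (-t) t (fun _ => 1) le_rfl le_rfl (by linarith)
    simp only [mul_one] at h
    rw [h, intervalIntegral.integral_const_mul,
      intervalIntegral.integral_sub (continuous_const.intervalIntegrable _ _)
        ((continuous_pow 2).intervalIntegrable _ _),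
      intervalIntegral.integral_const, integral_pow]
    simp only [smul_eq_mul]
    push_cast
    ring
  refine ⟨?_, part2, ?_⟩
  · intro t ht x hx
    obtain ⟨hx1, hx2⟩ := hx
    rw [hcg t (-t) x (fun y => Real.exp y) le_rfl hx2.le (by linarith),
      hcg t x t (fun y => Real.exp (-y)) (by linarith) le_rfl hx2.le]
    simp only [mul_assoc]
    rw [intervalIntegral.integral_const_mul, intervalIntegral.integral_const_mul,
      keyP, keyM, hψ, if_pos ⟨hx1, hx2⟩]
    simp only [Real.exp_neg]
    have hex := Real.exp_ne_zero x
    have het := Real.exp_ne_zero t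
    field_simp
    ring
  · intro t ht
    have heq : (fun s : ℝ => ∫ y in (-s)..s, ψ s y) =ᶠ[nhds t]
        (fun s : ℝ => (1 / (2 * Real.sqrt (2 * Real.pi))) *
          ((4 / 3) * s ^ 3 + 4 * s ^ 2 + 4 * s)) := by
      filter_upwards [eventually_gt_nhds ht] with s hs using part2 s hs
    rw [heq.hasDerivAt_iff]
    have h3 : HasDerivAt (fun s : ℝ => s^3) (3*t^2) t := by simpa using hasDerivAt_pow 3 t
    have h2 : HasDerivAt (fun s : ℝ => s^2) (2*t) t := by simpa using hasDerivAt_pow 2 t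
    have h1 : HasDerivAt (fun s : ℝ => 4*s) (4:ℝ) t := by
      simpa using (hasDerivAt_id t).const_mul (4:ℝ)
    have hp := (((h3.const_mul (4/3:ℝ)).add (h2.const_mul (4:ℝ))).add h1).const_mul
      (1 / (2 * Real.sqrt (2 * Real.pi)))
    refine hp.congr_deriv ?_
    have h : Real.sqrt (2/Real.pi) * Real.sqrt (2*Real.pi) = 2 := by
      rw [← Real.sqrt_mul (by positivity)]
      rw [show (2/Real.pi) * (2*Real.pi) = 2^2 by field_simp]
      exact Real.sqrt_sq (by norm_num)
    have h2 : Real.sqrt (2/Real.pi) = 2 / Real.sqrt (2*Real.pi) := by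
      rw [eq_div_iff hs0]; exact h
    rw [h2]
    field_simp
    ring
end
end

section
/- Let μ be the 2π-periodic measure (1 + cos x) dx on ℝ, with trigonometric moments γ₀ = 1, γ_{±1} = 1/2, γ_k = 0 for |k| ≥ 2, and let Γ_n be its n×n Toeplitz moment matrices. Then Σ[Γ₁⁻¹] = 1, Σ[Γ₂⁻¹] = 4/3, and more generally the first differences h_n = Σ[Γ_{n+1}⁻¹] − Σ[Γ_n⁻¹] satisfy h_{2n} = (n+1)/(2n+1) and h_{2n+1} = (n+1)/(2n+3) for all n ≥ 0. -/
open Matrix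
open Finset

noncomputable section

/-- Trigonometric moments of the measure `(1 + cos x) dx`:
`γ₀ = 1`, `γ_{±1} = 1/2`, `γ_k = 0` for `|k| ≥ 2`. -/
def gammaCos : ℤ → ℝ := fun k => if k = 0 then 1 else if k = 1 ∨ k = -1 then 1 / 2 else 0

/-- The `n×n` Toeplitz moment matrix `Γ_n = (γ_{j−k})` of `(1 + cos x) dx`. -/
def GammaCos (n : ℕ) : Matrix (Fin n) (Fin n) ℝ :=
  fun j k => gammaCos ((j : ℤ) - (k : ℤ))

/-- `Σ[Γ_n⁻¹]`, the sum of all entries of the inverse moment matrix. -/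
def SigmaCos (n : ℕ) : ℝ := ∑ i : Fin n, ∑ j : Fin n, (GammaCos n)⁻¹ i j

/-- helper: sum over `Fin n` of an indicator on the integer coercion. -/
lemma sum_if_coe {n : ℕ} (c : ℤ) (g : ℤ → ℝ) :
    (∑ j : Fin n, if (j : ℤ) = c then g c else 0)
      = if 0 ≤ c ∧ c < n then g c else 0 := by
  by_cases h : 0 ≤ c ∧ c < (n : ℤ)
  · obtain ⟨h1, h2⟩ := h
    have hj0 : ((⟨c.toNat, by omega⟩ : Fin n) : ℤ) = c := by simp; omega
    rw [if_pos ⟨h1, h2⟩]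
    rw [Finset.sum_eq_single (⟨c.toNat, by omega⟩ : Fin n)]
    · rw [if_pos hj0]
    · intro b _ hb
      rw [if_neg]
      intro hbc
      apply hb
      apply Fin.ext
      omega
    · intro hmem; exact absurd (Finset.mem_univ _) hmem
  · rw [if_neg h]
    apply Finset.sum_eq_zero
    intro j _
    rw [if_neg]
    intro hj
    apply h
    constructor
    · omega
    · have := j.isLt; omega

/-- three-term reduction of the Toeplitz sum. -/
lemma tsum3 {n : ℕ} (f : ℤ → ℝ) (hf0 : f (-1) = 0) (hfn : f n = 0) (i : Fin n) :
    ∑ j : Fin n, gammaCos ((i : ℤ) - (j : ℤ)) * f j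
      = f ((i : ℤ) - 1) / 2 + f (i : ℤ) + f ((i : ℤ) + 1) / 2 := by
  have hsplit : ∀ j : Fin n, gammaCos ((i : ℤ) - (j : ℤ)) * f j
      = ((if (j : ℤ) = (i : ℤ) - 1 then f ((i:ℤ)-1) / 2 else 0)
      + (if (j : ℤ) = (i : ℤ) then f (i:ℤ) else 0))
      + (if (j : ℤ) = (i : ℤ) + 1 then f ((i:ℤ)+1) / 2 else 0) := by
    intro j
    unfold gammaCos
    rcases eq_or_ne ((j : ℤ)) ((i : ℤ)) with h0 | h0
    · rw [if_pos (by omega), if_pos h0, if_neg (by omega), if_neg (by omega), h0]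
      ring
    · rw [if_neg (by omega)]
      rcases eq_or_ne ((j : ℤ)) ((i : ℤ) - 1) with h1 | h1
      · rw [if_pos (by omega), if_pos h1, if_neg h0, if_neg (by omega), h1]
        ring
      · rcases eq_or_ne ((j : ℤ)) ((i : ℤ) + 1) with h2 | h2
        · rw [if_pos (by omega), if_neg h1, if_neg h0, if_pos h2, h2]
          ring
        · rw [if_neg (by omega), if_neg h1, if_neg h0, if_neg h2]
          ring
  rw [Finset.sum_congr rfl (fun j _ => hsplit j)]
  rw [Finset.sum_add_distrib, Finset.sum_add_distrib]
  rw [sum_if_coe ((i:ℤ) - 1) (fun c => f ((i:ℤ)-1) / 2),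
      sum_if_coe ((i:ℤ)) (fun c => f (i:ℤ)),
      sum_if_coe ((i:ℤ) + 1) (fun c => f ((i:ℤ)+1) / 2)]
  have hi1 : (0:ℤ) ≤ i ∧ (i:ℤ) < n := ⟨by omega, by exact_mod_cast i.isLt⟩
  rw [if_pos hi1]
  congr 1
  · congr 1
    by_cases h : (0:ℤ) ≤ (i:ℤ) - 1 ∧ (i:ℤ) - 1 < n
    · rw [if_pos h]
    · rw [if_neg h]
      have : (i:ℤ) - 1 = -1 := by omega
      rw [this, hf0]
      ring
  · by_cases h : (0:ℤ) ≤ (i:ℤ) + 1 ∧ (i:ℤ) + 1 < n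
    · rw [if_pos h]
    · rw [if_neg h]
      have : (i:ℤ) + 1 = (n:ℤ) := by omega
      rw [this, hfn]
      ring

/-- entries (extended to `ℤ`) of the explicit inverse of `Γ_n`. -/
def bB (n : ℕ) (k : ℤ) (j : ℤ) : ℝ :=
  2 * (-1 : ℝ) ^ (j + k) * ((min j k + 1 : ℤ) : ℝ) * (((n : ℤ) - max j k : ℤ) : ℝ) / ((n : ℝ) + 1)

/-- the explicit inverse matrix. -/
def Bmat (n : ℕ) : Matrix (Fin n) (Fin n) ℝ := fun i k => bB n k i

lemma neg_one_zpow_add (a : ℤ) : (-1 : ℝ) ^ (a + 1) = -(-1 : ℝ) ^ a := by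
  rw [zpow_add_one₀ (by norm_num : (-1:ℝ) ≠ 0)]; ring

lemma neg_one_zpow_sub (a : ℤ) : (-1 : ℝ) ^ (a - 1) = -(-1 : ℝ) ^ a := by
  rw [zpow_sub_one₀ (by norm_num : (-1:ℝ) ≠ 0)]
  norm_num

lemma neg_one_zpow_two_mul (a : ℤ) : (-1 : ℝ) ^ (2 * a) = 1 := by
  rw [_root_.zpow_mul]
  norm_num

lemma bB_zero_left (n : ℕ) (k : Fin n) : bB n k (-1) = 0 := by
  unfold bB
  have : min (-1 : ℤ) (k : ℤ) = -1 := min_eq_left (by omega)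
  rw [this]
  norm_num

lemma bB_zero_right (n : ℕ) (k : Fin n) : bB n k n = 0 := by
  unfold bB
  have : max (n : ℤ) (k : ℤ) = n := max_eq_left (by have := k.isLt; omega)
  rw [this]
  norm_num

lemma bB_three (n : ℕ) (i k : Fin n) :
    bB n k ((i:ℤ) - 1) / 2 + bB n k (i:ℤ) + bB n k ((i:ℤ) + 1) / 2
      = if i = k then 1 else 0 := by
  have hn : (n : ℝ) + 1 ≠ 0 := by positivity
  have hkn : (k : ℤ) < n := by exact_mod_cast k.isLt
  unfold bB
  rcases lt_trichotomy ((i : ℤ)) ((k : ℤ)) with hik | hik | hik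
  · rw [if_neg (by intro h; rw [h] at hik; omega)]
    rw [min_eq_left (by omega), min_eq_left (by omega), min_eq_left (by omega),
        max_eq_right (by omega), max_eq_right (by omega), max_eq_right (by omega)]
    rw [show (i:ℤ) - 1 + k = ((i:ℤ) + k) - 1 by ring, show (i:ℤ) + 1 + k = ((i:ℤ) + k) + 1 by ring,
        neg_one_zpow_sub, neg_one_zpow_add]
    push_cast
    ring
  · rw [if_pos (Fin.ext (by omega))]
    rw [min_eq_left (by omega), min_eq_left (by omega), min_eq_right (by omega),
        max_eq_right (by omega), max_eq_right (by omega), max_eq_left (by omega)]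
    rw [show (i:ℤ) - 1 + k = 2 * k - 1 by omega, show (i:ℤ) + k = 2 * k by omega,
        show (i:ℤ) + 1 + k = 2 * k + 1 by omega,
        neg_one_zpow_sub, neg_one_zpow_add, neg_one_zpow_two_mul]
    rw [hik]
    push_cast
    field_simp
    ring
  · rw [if_neg (by intro h; rw [h] at hik; omega)]
    rw [min_eq_right (by omega), min_eq_right (by omega), min_eq_right (by omega),
        max_eq_left (by omega), max_eq_left (by omega), max_eq_left (by omega)]
    rw [show (i:ℤ) - 1 + k = ((i:ℤ) + k) - 1 by ring, show (i:ℤ) + 1 + k = ((i:ℤ) + k) + 1 by ring,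
        neg_one_zpow_sub, neg_one_zpow_add]
    push_cast
    ring

lemma GammaCos_mul_Bmat (n : ℕ) : GammaCos n * Bmat n = 1 := by
  ext i k
  rw [Matrix.mul_apply]
  have : ∀ j : Fin n, GammaCos n i j * Bmat n j k = gammaCos ((i:ℤ) - (j:ℤ)) * bB n k j := by
    intro j; rfl
  rw [Finset.sum_congr rfl (fun j _ => this j)]
  rw [tsum3 (bB n k) (bB_zero_left n k) (bB_zero_right n k) i]
  rw [bB_three n i k, Matrix.one_apply]

lemma sigma_eq (n : ℕ) (a b : ℝ) (ha : a - b = 1 / 2)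
    (hb : 1 / 2 + (a + b * n) * (-1 : ℝ) ^ (n : ℤ) = 0) :
    SigmaCos n = ∑ i ∈ Finset.range n, (1 / 2 + (a + b * i) * (-1 : ℝ) ^ (i : ℤ)) := by
  set x : ℤ → ℝ := fun j => 1 / 2 + (a + b * j) * (-1 : ℝ) ^ j with hxdef
  have hx0 : x (-1) = 0 := by
    simp only [hxdef]
    rw [show (-1 : ℤ) = 0 - 1 by ring, neg_one_zpow_sub]
    push_cast
    simp only [zpow_zero]
    nlinarith [ha]
  have hxn : x n = 0 := by
    simp only [hxdef]
    exact_mod_cast hb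
  have hGx : GammaCos n *ᵥ (fun j : Fin n => x j) = fun _ => 1 := by
    funext i
    show ∑ j, GammaCos n i j * x j = 1
    have : ∀ j : Fin n, GammaCos n i j * x j = gammaCos ((i:ℤ) - (j:ℤ)) * x j := fun j => rfl
    rw [Finset.sum_congr rfl (fun j _ => this j), tsum3 x hx0 hxn i]
    simp only [hxdef]
    rw [neg_one_zpow_sub, neg_one_zpow_add]
    push_cast
    ring
  have hGB := GammaCos_mul_Bmat n
  have hinv : (GammaCos n)⁻¹ = Bmat n := Matrix.inv_eq_right_inv hGB
  have hBG : Bmat n * GammaCos n = 1 := mul_eq_one_comm.mp hGB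
  have hBones : (Bmat n *ᵥ fun _ => (1:ℝ)) = fun j : Fin n => x j := by
    rw [← hGx, Matrix.mulVec_mulVec, hBG, Matrix.one_mulVec]
  have hrow : ∀ i : Fin n, ∑ j : Fin n, Bmat n i j = x i := by
    intro i
    have := congrFun hBones i
    simpa [Matrix.mulVec, dotProduct] using this
  unfold SigmaCos
  rw [hinv]
  rw [Finset.sum_congr rfl (fun i _ => hrow i)]
  rw [← Fin.sum_univ_eq_sum_range (fun i : ℕ => (1 : ℝ) / 2 + (a + b * i) * (-1 : ℝ) ^ (i : ℤ)) n]
  exact Finset.sum_congr rfl (fun i _ => rfl)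

lemma alt_sums (m : ℕ) :
    (∑ i ∈ Finset.range (2 * m), (-1 : ℝ) ^ (i : ℤ) = 0)
    ∧ (∑ i ∈ Finset.range (2 * m), (i : ℝ) * (-1 : ℝ) ^ (i : ℤ) = -m) := by
  induction m with
  | zero => simp
  | succ m ih =>
    obtain ⟨ih1, ih2⟩ := ih
    have h2m : ((-1 : ℝ)) ^ ((2 * m : ℕ) : ℤ) = 1 := by
      rw [show ((2 * m : ℕ) : ℤ) = 2 * (m : ℤ) by push_cast; ring, neg_one_zpow_two_mul]
    have h2m1 : ((-1 : ℝ)) ^ ((2 * m + 1 : ℕ) : ℤ) = -1 := by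
      rw [show ((2 * m + 1 : ℕ) : ℤ) = 2 * (m : ℤ) + 1 by push_cast; ring,
          neg_one_zpow_add, neg_one_zpow_two_mul]
    have hr : 2 * (m + 1) = (2 * m + 1) + 1 := by ring
    rw [hr, Finset.sum_range_succ, Finset.sum_range_succ, Finset.sum_range_succ,
        Finset.sum_range_succ]
    constructor
    · rw [ih1, h2m, h2m1]; ring
    · rw [ih2, h2m, h2m1]; push_cast; ring

lemma sigma_odd (m : ℕ) : SigmaCos (2 * m + 1) = m + 1 := by
  have hb : (1 : ℝ) / 2 + ((1:ℝ)/2 + 0 * (2*m+1 : ℕ)) * (-1 : ℝ) ^ ((2*m+1 : ℕ) : ℤ) = 0 := by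
    rw [show ((2 * m + 1 : ℕ) : ℤ) = 2 * (m : ℤ) + 1 by push_cast; ring,
        neg_one_zpow_add, neg_one_zpow_two_mul]
    ring
  rw [sigma_eq (2*m+1) (1/2) 0 (by norm_num) hb]
  obtain ⟨h1, _⟩ := alt_sums m
  rw [Finset.sum_range_succ]
  have h2m : ((-1 : ℝ)) ^ ((2 * m : ℕ) : ℤ) = 1 := by
    rw [show ((2 * m : ℕ) : ℤ) = 2 * (m : ℤ) by push_cast; ring, neg_one_zpow_two_mul]
  have : ∀ i ∈ Finset.range (2*m), (1:ℝ)/2 + ((1:ℝ)/2 + 0 * i) * (-1 : ℝ) ^ (i : ℤ)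
      = 1/2 + (1/2) * (-1 : ℝ) ^ (i : ℤ) := by intro i _; ring
  rw [Finset.sum_congr rfl this, Finset.sum_add_distrib, ← Finset.mul_sum, h1,
      Finset.sum_const, h2m]
  simp
  ring

lemma sigma_even (m : ℕ) : SigmaCos (2 * m) = m + m / (2 * m + 1) := by
  have hden : ((2 * m : ℝ) + 1) ≠ 0 := by positivity
  set a : ℝ := 1/2 - 1/(2*m+1) with hadef
  set b : ℝ := -1/(2*m+1) with hbdef
  have ha : a - b = 1/2 := by rw [hadef, hbdef]; ring
  have h2m : ((-1 : ℝ)) ^ ((2 * m : ℕ) : ℤ) = 1 := by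
    rw [show ((2 * m : ℕ) : ℤ) = 2 * (m : ℤ) by push_cast; ring, neg_one_zpow_two_mul]
  have hb : (1 : ℝ) / 2 + (a + b * (2*m : ℕ)) * (-1 : ℝ) ^ ((2*m : ℕ) : ℤ) = 0 := by
    rw [h2m, hadef, hbdef]
    push_cast
    field_simp
    ring
  rw [sigma_eq (2*m) a b ha hb]
  obtain ⟨h1, h2⟩ := alt_sums m
  have : ∀ i ∈ Finset.range (2*m), (1:ℝ)/2 + (a + b * i) * (-1 : ℝ) ^ (i : ℤ)
      = 1/2 + a * (-1 : ℝ) ^ (i : ℤ) + b * ((i:ℝ) * (-1 : ℝ) ^ (i : ℤ)) := by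
    intro i _; ring
  rw [Finset.sum_congr rfl this, Finset.sum_add_distrib, Finset.sum_add_distrib,
      ← Finset.mul_sum, ← Finset.mul_sum, h1, h2, Finset.sum_const]
  simp only [Finset.card_range, nsmul_eq_mul, mul_zero, add_zero]
  rw [hbdef]
  field_simp
  push_cast
  ring

/-- for `μ = (1 + cos x)dx`, `Σ[Γ₁⁻¹] = 1`, `Σ[Γ₂⁻¹] = 4/3`, and
the first differences `h_n = Σ[Γ_{n+1}⁻¹] − Σ[Γ_n⁻¹]` satisfy
`h_{2n} = (n+1)/(2n+1)` and `h_{2n+1} = (n+1)/(2n+3)`. -/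
theorem stmt19 :
    SigmaCos 1 = 1 ∧ SigmaCos 2 = 4 / 3 ∧
    ∀ n : ℕ,
      SigmaCos (2 * n + 1) - SigmaCos (2 * n) = (n + 1) / (2 * n + 1) ∧
      SigmaCos (2 * n + 2) - SigmaCos (2 * n + 1) = (n + 1) / (2 * n + 3) := by
  have hodd := sigma_odd
  have heven := sigma_even
  refine ⟨?_, ?_, fun n => ⟨?_, ?_⟩⟩
  · have := hodd 0; norm_num at this; exact this
  · have := heven 1; norm_num at this; exact this
  · rw [hodd n, heven n]
    have h1 : ((2:ℝ) * n + 1) ≠ 0 := by positivity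
    field_simp
    ring
  · have h22 : 2 * n + 2 = 2 * (n + 1) := by ring
    rw [h22, heven (n+1), hodd n]
    have h1 : ((2:ℝ) * (n+1) + 1) ≠ 0 := by positivity
    push_cast
    field_simp
    ring

end
end
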